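/- Let Y be a real-valued random variable with atomless law and cumulative distribution function F_Y, set Ỹ = F_Y(Y), and let Z be a random variable taking values in a finite set 𝒵 on the same probability space. Then Y and Z are independent if and only if for every z ∈ 𝒵 and every y ∈ [0,1]: E[ (1{Z = z} − P(Z = z))·γ_y^⊥(Ỹ) ] = 0. -/

import Mathlib

open MeasureTheory ProbabilityTheory

/-- `γ_y^⊥(t) = y·exp(t·y) − (exp(y) − 1)`. -/
noncomputable def gammaPerp (y t : ℝ) : ℝ := y * Real.exp (t * y) - (Real.exp y - 1)

open scoped Nat NNReal ENNReal


private lemma aux_bnd {c y : ℝ} (h0 : 0 < y) (h1 : y ≤ 1) (n : ℕ) : |c * y ^ n| ≤ |c| := by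
  rw [abs_mul, abs_pow]
  exact mul_le_of_le_one_right (abs_nonneg _) (pow_le_one₀ (abs_nonneg _) (by rwa [abs_of_pos h0]))

private lemma aux_step (c : ℕ → ℝ) (hs : Summable fun n => |c n|)
    (h : ∀ y ∈ Set.Ioc (0:ℝ) 1, ∑' n, c n * y ^ n = 0) :
    c 0 = 0 ∧ ∀ y ∈ Set.Ioc (0:ℝ) 1, ∑' n, c (n+1) * y ^ n = 0 := by
  have hs' : Summable fun n => |c (n+1)| := by
    have := (summable_nat_add_iff 1).2 hs
    simpa using this
  have hsum : ∀ y ∈ Set.Ioc (0:ℝ) 1, Summable fun n => c n * y ^ n := fun y hy =>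
    Summable.of_norm_bounded hs fun n => by
      rw [Real.norm_eq_abs]; exact aux_bnd hy.1 hy.2 n
  have hsum' : ∀ y ∈ Set.Ioc (0:ℝ) 1, Summable fun n => c (n+1) * y ^ n := fun y hy =>
    Summable.of_norm_bounded hs' fun n => by
      rw [Real.norm_eq_abs]; exact aux_bnd hy.1 hy.2 n
  have key : ∀ y ∈ Set.Ioc (0:ℝ) 1, c 0 + y * ∑' n, c (n+1) * y ^ n = 0 := by
    intro y hy
    have h1 := (Summable.tsum_eq_zero_add (hsum y hy)).symm
    rw [h y hy] at h1
    have h2 : ∑' n, c (n+1) * y ^ (n+1) = y * ∑' n, c (n+1) * y ^ n := by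
      rw [← tsum_mul_left]
      exact tsum_congr fun n => by ring
    simp only [pow_zero, mul_one] at h1
    rw [h2] at h1
    linarith
  set S := ∑' n, |c (n+1)| with hS
  have hbound : ∀ y ∈ Set.Ioc (0:ℝ) 1, |c 0| ≤ y * S := by
    intro y hy
    have h1 := key y hy
    have h2 : |c 0| = |y * ∑' n, c (n+1) * y ^ n| := by
      rw [show c 0 = -(y * ∑' n, c (n+1) * y ^ n) by linarith, abs_neg]
    have h3 : |∑' n, c (n+1) * y ^ n| ≤ S := by
      have hn : Summable (fun n => ‖c (n+1) * y ^ n‖) := by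
        simp only [Real.norm_eq_abs]; exact (hsum' y hy).abs
      have t1 : |∑' n, c (n+1) * y ^ n| ≤ ∑' n, |c (n+1) * y ^ n| := by
        have := norm_tsum_le_tsum_norm hn
        simpa only [Real.norm_eq_abs] using this
      have t2 : ∑' n, |c (n+1) * y ^ n| ≤ S :=
        Summable.tsum_le_tsum (fun n => aux_bnd hy.1 hy.2 n) ((hsum' y hy).abs) hs'
      linarith
    rw [h2, abs_mul, abs_of_pos hy.1]
    exact mul_le_mul_of_nonneg_left h3 (le_of_lt hy.1)
  have hc0 : c 0 = 0 := by
    have htend : Filter.Tendsto (fun n : ℕ => (1 / (n + 1) : ℝ) * S) Filter.atTop (nhds (0 * S)) :=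
      tendsto_one_div_add_atTop_nhds_zero_nat.mul_const S
    rw [zero_mul] at htend
    have hle : ∀ n : ℕ, |c 0| ≤ (1 / (n + 1) : ℝ) * S := by
      intro n
      apply hbound
      constructor
      · positivity
      · rw [div_le_one (by positivity)]; linarith [Nat.cast_nonneg (α := ℝ) n]
    have h4 := ge_of_tendsto' htend hle
    have h5 := abs_nonneg (c 0)
    rw [← abs_eq_zero]
    linarith
  refine ⟨hc0, fun y hy => ?_⟩
  have h1 := key y hy
  rw [hc0, zero_add] at h1
  rcases mul_eq_zero.1 h1 with h | h
  · exact absurd h (ne_of_gt hy.1)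
  · exact h

private lemma aux_coeffs_zero (c : ℕ → ℝ) (hs : Summable fun n => |c n|)
    (h : ∀ y ∈ Set.Ioc (0:ℝ) 1, ∑' n, c n * y ^ n = 0) : ∀ n, c n = 0 := by
  intro n
  induction n generalizing c with
  | zero => exact (aux_step c hs h).1
  | succ k ih =>
      have hs' : Summable fun n => |c (n+1)| := by
        have := (summable_nat_add_iff 1).2 hs; simpa using this
      exact ih (fun n => c (n+1)) hs' (aux_step c hs h).2

private lemma aux_ae_mem (μ : Measure ℝ) (hsupp : μ (Set.Icc (0:ℝ) 1)ᶜ = 0) :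
    ∀ᵐ x ∂μ, x ∈ Set.Icc (0:ℝ) 1 := by
  rw [MeasureTheory.ae_iff]
  exact hsupp

private lemma aux_int_of_bound (μ : Measure ℝ) [IsFiniteMeasure μ]
    (hsupp : μ (Set.Icc (0:ℝ) 1)ᶜ = 0)
    (f : ℝ → ℝ) (hf : Measurable f) (C : ℝ) (hC : ∀ x ∈ Set.Icc (0:ℝ) 1, ‖f x‖ ≤ C) :
    Integrable f μ := by
  refine Integrable.mono' (integrable_const C) hf.aestronglyMeasurable ?_
  filter_upwards [aux_ae_mem μ hsupp] with x hx
  exact hC x hx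

private lemma aux_integral_abs_le (μ : Measure ℝ) [IsFiniteMeasure μ]
    (hsupp : μ (Set.Icc (0:ℝ) 1)ᶜ = 0)
    (f : ℝ → ℝ) (hf : Measurable f) (C : ℝ) (hC : ∀ x ∈ Set.Icc (0:ℝ) 1, ‖f x‖ ≤ C) :
    ∫ x, ‖f x‖ ∂μ ≤ C * (μ Set.univ).toReal := by
  have h1 : Integrable f μ := aux_int_of_bound μ hsupp f hf C hC
  have h2 : ∫ x, ‖f x‖ ∂μ ≤ ∫ _, C ∂μ := by
    refine integral_mono_ae h1.norm (integrable_const C) ?_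
    filter_upwards [aux_ae_mem μ hsupp] with x hx
    exact hC x hx
  rw [integral_const, smul_eq_mul, measureReal_def] at h2
  linarith

private lemma aux_laplace_series (μ : Measure ℝ) [IsFiniteMeasure μ]
    (hsupp : μ (Set.Icc (0:ℝ) 1)ᶜ = 0) (y : ℝ) :
    ∫ x, Real.exp (x * y) ∂μ = ∑' n : ℕ, (∫ x, x ^ n ∂μ) * (y ^ n / (n ! : ℝ)) := by
  have hmono : ∀ n : ℕ, ∀ x ∈ Set.Icc (0:ℝ) 1, ‖(x * y) ^ n / (n ! : ℝ)‖ ≤ |y| ^ n / (n ! : ℝ) := by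
    intro n x hx
    have hx1 : |x| ≤ 1 := by rw [abs_le]; exact ⟨by linarith [hx.1], hx.2⟩
    have hxy : |x * y| ≤ |y| := by
      rw [abs_mul]; exact mul_le_of_le_one_left (abs_nonneg y) hx1
    calc ‖(x * y) ^ n / (n ! : ℝ)‖ = |x * y| ^ n / (n ! : ℝ) := by
          rw [norm_div, norm_pow, Real.norm_eq_abs, Real.norm_eq_abs, Nat.abs_cast]
      _ ≤ |y| ^ n / (n ! : ℝ) := by gcongr
  have hint : ∀ n : ℕ, Integrable (fun x => (x * y) ^ n / (n ! : ℝ)) μ := fun n =>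
    aux_int_of_bound μ hsupp _ (by fun_prop) _ (hmono n)
  have hintpow : ∀ n : ℕ, Integrable (fun x => x ^ n) μ := fun n =>
    aux_int_of_bound μ hsupp _ (by fun_prop) 1 (fun x hx => by
      rw [Real.norm_eq_abs, abs_pow]
      exact pow_le_one₀ (abs_nonneg _) (by rw [abs_le]; exact ⟨by linarith [hx.1], hx.2⟩))
  have hsumm : Summable fun n : ℕ => ∫ x, ‖(x * y) ^ n / (n ! : ℝ)‖ ∂μ := by
    refine Summable.of_nonneg_of_le (fun n => integral_nonneg fun x => norm_nonneg _)
      (fun n => aux_integral_abs_le μ hsupp _ (by fun_prop) _ (hmono n)) ?_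
    exact (Real.summable_pow_div_factorial |y|).mul_right _
  have key := integral_tsum_of_summable_integral_norm hint hsumm
  have hexp : ∀ x : ℝ, Real.exp (x * y) = ∑' n : ℕ, (x * y) ^ n / (n ! : ℝ) := by
    intro x
    rw [Real.exp_eq_exp_ℝ, NormedSpace.exp_eq_tsum_div]
  have hterm : ∀ n : ℕ, ∫ x, (x * y) ^ n / (n ! : ℝ) ∂μ = (∫ x, x ^ n ∂μ) * (y ^ n / (n ! : ℝ)) := by
    intro n
    rw [← integral_mul_const]
    congr 1
    ext x
    rw [mul_pow]
    ring
  calc ∫ x, Real.exp (x * y) ∂μ = ∫ x, ∑' n : ℕ, (x * y) ^ n / (n ! : ℝ) ∂μ := by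
        congr 1; ext x; exact hexp x
    _ = ∑' n : ℕ, ∫ x, (x * y) ^ n / (n ! : ℝ) ∂μ := key.symm
    _ = ∑' n : ℕ, (∫ x, x ^ n ∂μ) * (y ^ n / (n ! : ℝ)) := tsum_congr hterm

private lemma aux_int_cont (μ : Measure ℝ) [IsFiniteMeasure μ]
    (hsupp : μ (Set.Icc (0:ℝ) 1)ᶜ = 0)
    (f : ℝ → ℝ) (hf : Continuous f) : Integrable f μ := by
  obtain ⟨C, hC⟩ := isCompact_Icc.exists_bound_of_continuousOn
    (hf.continuousOn : ContinuousOn f (Set.Icc (0:ℝ) 1))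
  exact aux_int_of_bound μ hsupp f hf.measurable C hC

private lemma aux_norm_integral_le (μ : Measure ℝ) [IsFiniteMeasure μ]
    (hsupp : μ (Set.Icc (0:ℝ) 1)ᶜ = 0)
    (f : ℝ → ℝ) (C : ℝ) (hC : ∀ x ∈ Set.Icc (0:ℝ) 1, ‖f x‖ ≤ C) :
    ‖∫ x, f x ∂μ‖ ≤ C * (μ Set.univ).toReal := by
  refine norm_integral_le_of_norm_le_const ?_
  filter_upwards [aux_ae_mem μ hsupp] with x hx
  exact hC x hx

private lemma aux_ext_of_moments (μ ν : Measure ℝ) [IsFiniteMeasure μ] [IsFiniteMeasure ν]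
    (hμ : μ (Set.Icc (0:ℝ) 1)ᶜ = 0) (hν : ν (Set.Icc (0:ℝ) 1)ᶜ = 0)
    (h : ∀ n : ℕ, ∫ x, x ^ n ∂μ = ∫ x, x ^ n ∂ν) : μ = ν := by
  have hintpow : ∀ (ρ : Measure ℝ) [IsFiniteMeasure ρ], ρ (Set.Icc (0:ℝ) 1)ᶜ = 0 →
      ∀ n : ℕ, Integrable (fun x : ℝ => x ^ n) ρ := by
    intro ρ _ hρ n
    refine aux_int_of_bound ρ hρ _ (by fun_prop) 1 (fun x hx => ?_)
    rw [Real.norm_eq_abs, abs_pow]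
    exact pow_le_one₀ (abs_nonneg _) (by rw [abs_le]; exact ⟨by linarith [hx.1], hx.2⟩)
  -- polynomials integrate equally
  have hpoly : ∀ q : Polynomial ℝ, ∫ x, q.eval x ∂μ = ∫ x, q.eval x ∂ν := by
    intro q
    have heval : ∀ x : ℝ, q.eval x =
        ∑ i ∈ Finset.range (q.natDegree + 1), q.coeff i * x ^ i := by
      intro x
      rw [Polynomial.eval_eq_sum_range]
    have hI : ∀ (ρ : Measure ℝ) [IsFiniteMeasure ρ], ρ (Set.Icc (0:ℝ) 1)ᶜ = 0 →
        ∫ x, q.eval x ∂ρ = ∑ i ∈ Finset.range (q.natDegree + 1), q.coeff i * ∫ x, x ^ i ∂ρ := by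
      intro ρ _ hρ
      calc ∫ x, q.eval x ∂ρ
          = ∫ x, ∑ i ∈ Finset.range (q.natDegree + 1), q.coeff i * x ^ i ∂ρ := by
            congr 1; ext x; exact heval x
        _ = ∑ i ∈ Finset.range (q.natDegree + 1), ∫ x, q.coeff i * x ^ i ∂ρ :=
            integral_finset_sum _ (fun i _ => (hintpow ρ hρ i).const_mul _)
        _ = ∑ i ∈ Finset.range (q.natDegree + 1), q.coeff i * ∫ x, x ^ i ∂ρ := by
            refine Finset.sum_congr rfl fun i _ => ?_
            exact integral_const_mul _ _
    rw [hI μ hμ, hI ν hν]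
    exact Finset.sum_congr rfl fun i _ => by rw [h i]
  -- continuous functions integrate equally
  have hcont : ∀ f : ℝ → ℝ, Continuous f → ∫ x, f x ∂μ = ∫ x, f x ∂ν := by
    intro f hf
    set K : ℝ := (μ Set.univ).toReal + (ν Set.univ).toReal with hK
    have hK0 : 0 ≤ K := by positivity
    have hdelta : ∀ δ : ℝ, 0 < δ →
        |∫ x, f x ∂μ - ∫ x, f x ∂ν| ≤ δ * K := by
      intro δ hδ
      -- polynomial approximation on Icc 0 1
      haveI : Nonempty (Set.Icc (0:ℝ) 1) :=
        (Set.nonempty_Icc.2 zero_le_one).to_subtype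
      set g : C(Set.Icc (0:ℝ) 1, ℝ) := (ContinuousMap.mk f hf).restrict (Set.Icc (0:ℝ) 1)
      have hmem : g ∈ closure ((polynomialFunctions (Set.Icc (0:ℝ) 1) : Set C(Set.Icc (0:ℝ) 1, ℝ))) := by
        have h2 : closure ((polynomialFunctions (Set.Icc (0:ℝ) 1) : Set C(Set.Icc (0:ℝ) 1, ℝ))) = Set.univ := by
          rw [← Subalgebra.topologicalClosure_coe, polynomialFunctions_closure_eq_top]
          rfl
        rw [h2]
        trivial
      obtain ⟨p, hp, hdist⟩ := Metric.mem_closure_iff.1 hmem δ hδ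
      rw [polynomialFunctions_coe] at hp
      obtain ⟨q, hq⟩ := hp
      have happrox : ∀ x ∈ Set.Icc (0:ℝ) 1, ‖f x - q.eval x‖ ≤ δ := by
        intro x hx
        have hd := (ContinuousMap.dist_lt_iff hδ).1 hdist ⟨x, hx⟩
        rw [← hq] at hd
        simp only [Polynomial.toContinuousMapOnAlgHom_apply,
          Polynomial.toContinuousMapOn_apply, Polynomial.toContinuousMap_apply] at hd
        rw [Real.norm_eq_abs]
        rw [Real.dist_eq] at hd
        exact le_of_lt hd
      have hIμ : Integrable f μ := aux_int_cont μ hμ f hf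
      have hIν : Integrable f ν := aux_int_cont ν hν f hf
      have hIqμ : Integrable (fun x => q.eval x) μ :=
        aux_int_cont μ hμ _ (Polynomial.continuous q)
      have hIqν : Integrable (fun x => q.eval x) ν :=
        aux_int_cont ν hν _ (Polynomial.continuous q)
      have e1 : ∫ x, f x ∂μ - ∫ x, f x ∂ν
          = (∫ x, (f x - q.eval x) ∂μ) - (∫ x, (f x - q.eval x) ∂ν) := by
        rw [integral_sub hIμ hIqμ, integral_sub hIν hIqν, hpoly q]
        ring
      have b1 : ‖∫ x, (f x - q.eval x) ∂μ‖ ≤ δ * (μ Set.univ).toReal :=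
        aux_norm_integral_le μ hμ _ δ happrox
      have b2 : ‖∫ x, (f x - q.eval x) ∂ν‖ ≤ δ * (ν Set.univ).toReal :=
        aux_norm_integral_le ν hν _ δ happrox
      rw [e1, hK]
      calc |(∫ x, (f x - q.eval x) ∂μ) - (∫ x, (f x - q.eval x) ∂ν)|
          ≤ ‖∫ x, (f x - q.eval x) ∂μ‖ + ‖∫ x, (f x - q.eval x) ∂ν‖ := abs_sub _ _
        _ ≤ δ * (μ Set.univ).toReal + δ * (ν Set.univ).toReal := by linarith
        _ = δ * ((μ Set.univ).toReal + (ν Set.univ).toReal) := by ring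
    have hfinal : ∀ ε : ℝ, 0 < ε → |∫ x, f x ∂μ - ∫ x, f x ∂ν| ≤ 0 + ε := by
      intro ε hε
      have h1 := hdelta (ε / (K + 1)) (by positivity)
      have h2 : ε / (K + 1) * K ≤ ε := by
        rw [div_mul_eq_mul_div, div_le_iff₀ (by linarith)]
        nlinarith
      linarith
    have := le_of_forall_pos_le_add hfinal
    have habs := abs_nonneg (∫ x, f x ∂μ - ∫ x, f x ∂ν)
    have : |∫ x, f x ∂μ - ∫ x, f x ∂ν| = 0 := by linarith
    have := abs_eq_zero.1 this
    linarith
  -- conclude by bounded continuous functions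
  refine ext_of_forall_lintegral_eq_of_IsFiniteMeasure (fun f => ?_)
  have hfc : Continuous fun x : ℝ => ((f x : ℝ≥0) : ℝ) :=
    NNReal.continuous_coe.comp f.continuous
  have hIμ : Integrable (fun x : ℝ => ((f x : ℝ≥0) : ℝ)) μ := aux_int_cont μ hμ _ hfc
  have hIν : Integrable (fun x : ℝ => ((f x : ℝ≥0) : ℝ)) ν := aux_int_cont ν hν _ hfc
  rw [lintegral_coe_eq_integral _ hIμ, lintegral_coe_eq_integral _ hIν, hcont _ hfc]

private lemma aux_flat_null (μ : Measure ℝ) [IsProbabilityMeasure μ]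
    (hatom : ∀ a : ℝ, μ {a} = 0) (t : ℝ) :
    μ {s | t < s ∧ (μ (Set.Iic s)).toReal ≤ (μ (Set.Iic t)).toReal} = 0 := by
  set F : ℝ → ℝ := fun s => (μ (Set.Iic s)).toReal with hF
  set B : Set ℝ := {s | t < s ∧ F s ≤ F t} with hB
  have hIoc : ∀ s ∈ B, μ (Set.Ioc t s) = 0 := by
    intro s hs
    have hmono : μ (Set.Iic t) ≤ μ (Set.Iic s) := measure_mono (Set.Iic_subset_Iic.2 hs.1.le)
    have heq : μ (Set.Iic s) = μ (Set.Iic t) := by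
      have h1 : (μ (Set.Iic s)).toReal = (μ (Set.Iic t)).toReal := by
        have h2 : (μ (Set.Iic t)).toReal ≤ (μ (Set.Iic s)).toReal :=
          ENNReal.toReal_mono (measure_ne_top μ _) hmono
        exact le_antisymm hs.2 h2
      exact (ENNReal.toReal_eq_toReal_iff' (measure_ne_top μ _) (measure_ne_top μ _)).1 h1
    have := measure_diff (Set.Iic_subset_Iic.2 hs.1.le) measurableSet_Iic.nullMeasurableSet
      (measure_ne_top μ _)
    rw [show Set.Iic s \ Set.Iic t = Set.Ioc t s from by
      ext x; simp only [Set.mem_diff, Set.mem_Iic, Set.mem_Ioc, not_le]; exact and_comm, heq, tsub_self] at this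
    exact this
  set U : Set ℝ := {x | x ∈ B ∧ ∀ s ∈ B, s ≤ x} with hU
  have hUnull : μ U = 0 := by
    rcases Set.eq_empty_or_nonempty U with h | ⟨x₀, hx₀⟩
    · rw [h]; exact measure_empty
    · have hsub : U ⊆ {x₀} := by
        intro x hx
        have h1 := hx.2 x₀ hx₀.1
        have h2 := hx₀.2 x hx.1
        simp [le_antisymm h2 h1]
      exact measure_mono_null hsub (hatom x₀)
  have hOnull : μ (⋃ s : B, Set.Ioo t (s : ℝ)) = 0 := by
    obtain ⟨T, hTc, hTeq⟩ := TopologicalSpace.isOpen_iUnion_countable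
      (fun s : B => Set.Ioo t (s : ℝ)) (fun s => isOpen_Ioo)
    rw [← hTeq]
    refine (measure_biUnion_null_iff hTc).2 (fun s _ => ?_)
    exact measure_mono_null Set.Ioo_subset_Ioc_self (hIoc s s.2)
  have hcover : B ⊆ (⋃ s : B, Set.Ioo t (s : ℝ)) ∪ U := by
    intro x hx
    by_cases hc : ∃ s ∈ B, x < s
    · obtain ⟨s, hs, hxs⟩ := hc
      exact Or.inl (Set.mem_iUnion.2 ⟨⟨s, hs⟩, hx.1, hxs⟩)
    · push_neg at hc
      exact Or.inr ⟨hx, hc⟩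
  exact measure_mono_null hcover (by rw [measure_union_null_iff]; exact ⟨hOnull, hUnull⟩)

private lemma aux_laplace_ext (μ ν : Measure ℝ) [IsFiniteMeasure μ] [IsFiniteMeasure ν]
    (hμ : μ (Set.Icc (0:ℝ) 1)ᶜ = 0) (hν : ν (Set.Icc (0:ℝ) 1)ᶜ = 0)
    (hmassμ : (μ Set.univ).toReal ≤ 1) (hmassν : (ν Set.univ).toReal ≤ 1)
    (p : ℝ) (hp0 : 0 ≤ p) (hp1 : p ≤ 1)
    (h : ∀ y ∈ Set.Ioc (0:ℝ) 1,
      ∫ x, Real.exp (x * y) ∂μ = p * ∫ x, Real.exp (x * y) ∂ν) :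
    μ = (p.toNNReal : ℝ≥0) • ν := by
  have hmombnd : ∀ (ρ : Measure ℝ) [IsFiniteMeasure ρ], ρ (Set.Icc (0:ℝ) 1)ᶜ = 0 →
      (ρ Set.univ).toReal ≤ 1 → ∀ n : ℕ, |∫ x, x ^ n ∂ρ| ≤ 1 := by
    intro ρ _ hρ hm n
    have h1 : ‖∫ x, x ^ n ∂ρ‖ ≤ 1 * (ρ Set.univ).toReal := by
      refine aux_norm_integral_le ρ hρ _ 1 (fun x hx => ?_)
      rw [Real.norm_eq_abs, abs_pow]
      exact pow_le_one₀ (abs_nonneg _) (by rw [abs_le]; exact ⟨by linarith [hx.1], hx.2⟩)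
    rw [Real.norm_eq_abs] at h1
    nlinarith [ENNReal.toReal_nonneg (a := ρ Set.univ)]
  set c : ℕ → ℝ := fun n => ((∫ x, x ^ n ∂μ) - p * ∫ x, x ^ n ∂ν) / (n ! : ℝ) with hc
  have hcbnd : ∀ n, |c n| ≤ 2 * (1 ^ n / (n ! : ℝ)) := by
    intro n
    have h1 := hmombnd μ hμ hmassμ n
    have h2 := hmombnd ν hν hmassν n
    have hfac : (0:ℝ) < (n ! : ℝ) := by positivity
    have hnum : |(∫ x, x ^ n ∂μ) - p * ∫ x, x ^ n ∂ν| ≤ 2 := by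
      have hmul := abs_mul p (∫ x, x ^ n ∂ν)
      have habs := abs_sub (∫ x, x ^ n ∂μ) (p * ∫ x, x ^ n ∂ν)
      rw [abs_of_nonneg hp0] at hmul
      nlinarith [abs_nonneg (∫ x, x ^ n ∂ν)]
    have : |c n| = |(∫ x, x ^ n ∂μ) - p * ∫ x, x ^ n ∂ν| / (n ! : ℝ) := by
      rw [hc]; rw [abs_div, abs_of_pos hfac]
    rw [this, one_pow, div_le_iff₀ hfac]
    have he : 2 * (1 / (n ! : ℝ)) * (n ! : ℝ) = 2 := by field_simp
    rw [he]
    exact hnum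
  have hcs : Summable fun n => |c n| :=
    Summable.of_nonneg_of_le (fun n => abs_nonneg _) hcbnd
      ((Real.summable_pow_div_factorial 1).mul_left 2)
  have hsummable : ∀ (ρ : Measure ℝ) [IsFiniteMeasure ρ], ρ (Set.Icc (0:ℝ) 1)ᶜ = 0 →
      (ρ Set.univ).toReal ≤ 1 → ∀ y : ℝ,
      Summable fun n : ℕ => (∫ x, x ^ n ∂ρ) * (y ^ n / (n ! : ℝ)) := by
    intro ρ _ hρ hm y
    refine Summable.of_norm_bounded (Real.summable_pow_div_factorial |y|) (fun n => ?_)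
    have h1 := hmombnd ρ hρ hm n
    have hfac : (0:ℝ) < (n ! : ℝ) := by positivity
    rw [Real.norm_eq_abs, abs_mul, abs_div, abs_pow, abs_of_pos hfac]
    calc |∫ x, x ^ n ∂ρ| * (|y| ^ n / (n ! : ℝ)) ≤ 1 * (|y| ^ n / (n ! : ℝ)) := by
          gcongr
      _ = |y| ^ n / (n ! : ℝ) := one_mul _
  have hzero : ∀ y ∈ Set.Ioc (0:ℝ) 1, ∑' n, c n * y ^ n = 0 := by
    intro y hy
    have hLμ := aux_laplace_series μ hμ y
    have hLν := aux_laplace_series ν hν y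
    have hEq := h y hy
    rw [hLμ, hLν] at hEq
    have hsν := hsummable ν hν hmassν y
    have hsμ := hsummable μ hμ hmassμ y
    have hstep : ∑' n, c n * y ^ n
        = (∑' n, (∫ x, x ^ n ∂μ) * (y ^ n / (n ! : ℝ)))
          - p * ∑' n, (∫ x, x ^ n ∂ν) * (y ^ n / (n ! : ℝ)) := by
      rw [← tsum_mul_left, ← Summable.tsum_sub hsμ (hsν.mul_left p)]
      refine tsum_congr fun n => ?_
      rw [hc]
      field_simp
    rw [hstep, hEq]
    ring
  have hmom : ∀ n : ℕ, ∫ x, x ^ n ∂μ = p * ∫ x, x ^ n ∂ν := by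
    intro n
    have := aux_coeffs_zero c hcs hzero n
    rw [hc] at this
    simp only [] at this
    have hfac : ((n ! : ℝ)) ≠ 0 := by positivity
    field_simp at this
    linarith
  have hρsupp : ((p.toNNReal : ℝ≥0) • ν) (Set.Icc (0:ℝ) 1)ᶜ = 0 := by
    rw [Measure.smul_apply, hν, smul_zero]
  refine aux_ext_of_moments μ ((p.toNNReal : ℝ≥0) • ν) hμ hρsupp (fun n => ?_)
  rw [integral_smul_nnreal_measure]
  rw [hmom n]
  simp only [NNReal.smul_def, Real.coe_toNNReal p hp0, smul_eq_mul]

/-- For `Y` with atomless law, `Ỹ = F_Y(Y)`, and `Z` taking values in a finite set: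
`Y ⊥ Z` if and only if `E[(1{Z = z} − P(Z = z))·γ_y^⊥(Ỹ)] = 0` for every `z` and
every `y ∈ [0,1]`. -/
theorem stmt17 {Ω 𝒵 : Type*} [MeasurableSpace Ω] [MeasurableSpace 𝒵] [DecidableEq 𝒵]
    [MeasurableSingletonClass 𝒵] [Fintype 𝒵]
    (P : Measure Ω) [IsProbabilityMeasure P]
    (Y : Ω → ℝ) (Z : Ω → 𝒵) (hY : Measurable Y) (hZ : Measurable Z)
    (hatomless : ∀ a : ℝ, (P.map Y) {a} = 0) :
    IndepFun Y Z P ↔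
      ∀ z : 𝒵, ∀ y ∈ Set.Icc (0:ℝ) 1,
        ∫ ω, ((if Z ω = z then (1:ℝ) else 0) - (P {ω' | Z ω' = z}).toReal) *
          gammaPerp y (((P.map Y) (Set.Iic (Y ω))).toReal) ∂P = 0 := by
  classical
  haveI hμm : IsProbabilityMeasure (P.map Y) := Measure.isProbabilityMeasure_map hY.aemeasurable
  set F : ℝ → ℝ := fun t => ((P.map Y) (Set.Iic t)).toReal with hFdef
  have hFmono : Monotone F := fun a b hab =>
    ENNReal.toReal_mono (measure_ne_top _ _) (measure_mono (Set.Iic_subset_Iic.2 hab))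
  have hFmeas : Measurable F := hFmono.measurable
  have hF0 : ∀ t, 0 ≤ F t := fun t => ENNReal.toReal_nonneg
  have hF1 : ∀ t, F t ≤ 1 := by
    intro t
    have h1 : (P.map Y) (Set.Iic t) ≤ 1 := prob_le_one
    calc F t ≤ (1 : ℝ≥0∞).toReal := ENNReal.toReal_mono ENNReal.one_ne_top h1
      _ = 1 := ENNReal.toReal_one
  set T : Ω → ℝ := fun ω => F (Y ω) with hTdef
  have hTmeas : Measurable T := hFmeas.comp hY
  have hTmem : ∀ ω, T ω ∈ Set.Icc (0:ℝ) 1 := fun ω => ⟨hF0 _, hF1 _⟩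
  -- gamma basics
  have hgm : ∀ y : ℝ, Measurable fun t => gammaPerp y t := by
    intro y; unfold gammaPerp; fun_prop
  have hgb : ∀ y ∈ Set.Icc (0:ℝ) 1, ∀ t ∈ Set.Icc (0:ℝ) 1,
      ‖gammaPerp y t‖ ≤ 2 * Real.exp 1 := by
    intro y hy t ht
    have he1 : Real.exp (t * y) ≤ Real.exp 1 :=
      Real.exp_le_exp.2 (by nlinarith [hy.1, hy.2, ht.1, ht.2])
    have he2 : Real.exp y ≤ Real.exp 1 := Real.exp_le_exp.2 hy.2
    have he3 : (1:ℝ) ≤ Real.exp y := Real.one_le_exp hy.1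
    have he0 : 0 < Real.exp (t * y) := Real.exp_pos _
    rw [Real.norm_eq_abs]
    unfold gammaPerp
    rw [abs_le]
    constructor
    · nlinarith [hy.1, hy.2]
    · nlinarith [hy.1, hy.2]
  -- integrability of gamma of T under any finite restriction of P
  have hGmeas : ∀ y : ℝ, Measurable fun ω => gammaPerp y (T ω) :=
    fun y => (hgm y).comp hTmeas
  have hGint : ∀ y ∈ Set.Icc (0:ℝ) 1, Integrable (fun ω => gammaPerp y (T ω)) P := by
    intro y hy
    refine Integrable.mono' (integrable_const (2 * Real.exp 1))
      (hGmeas y).aestronglyMeasurable (Filter.Eventually.of_forall fun ω => ?_)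
    exact hgb y hy (T ω) (hTmem ω)
  constructor
  · -- forward
    intro hindep z y hy
    have hSmeas : MeasurableSet {ω' | Z ω' = z} := hZ (measurableSet_singleton z)
    have hχeq : (fun ω => if Z ω = z then (1:ℝ) else 0)
        = Set.indicator {ω' | Z ω' = z} (fun _ => (1:ℝ)) := by
      funext ω
      rw [Set.indicator_apply]
      rfl
    have hχm : Measurable fun ω => if Z ω = z then (1:ℝ) else 0 := by
      rw [hχeq]
      exact (measurable_const.indicator hSmeas)
    have hχint : Integrable (fun ω => if Z ω = z then (1:ℝ) else 0) P := by
      refine Integrable.mono' (integrable_const 1) hχm.aestronglyMeasurable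
        (Filter.Eventually.of_forall fun ω => ?_)
      by_cases hc : Z ω = z <;> simp [hc]
    have hχmean : ∫ ω, (if Z ω = z then (1:ℝ) else 0) ∂P = (P {ω' | Z ω' = z}).toReal := by
      rw [hχeq, integral_indicator_const (1:ℝ) hSmeas, smul_eq_mul, mul_one, measureReal_def]
    have hindep2 : IndepFun (fun ω => gammaPerp y (T ω))
        (fun ω => if Z ω = z then (1:ℝ) else 0) P := by
      have h1 : (fun ω => gammaPerp y (T ω)) = (fun x => gammaPerp y (F x)) ∘ Y := rfl
      have h2 : (fun ω => if Z ω = z then (1:ℝ) else 0)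
          = (fun v => if v = z then (1:ℝ) else 0) ∘ Z := rfl
      rw [h1, h2]
      exact hindep.comp ((hgm y).comp hFmeas) (measurable_of_countable _)
    have hmul := hindep2.integral_fun_mul_eq_mul_integral (hGint y hy).aestronglyMeasurable hχint.aestronglyMeasurable
    have hmul' : ∫ ω, gammaPerp y (T ω) * (if Z ω = z then (1:ℝ) else 0) ∂P
        = (∫ ω, gammaPerp y (T ω) ∂P) * ∫ ω, (if Z ω = z then (1:ℝ) else 0) ∂P := hmul
    have hsplit : ∫ ω, ((if Z ω = z then (1:ℝ) else 0) - (P {ω' | Z ω' = z}).toReal) *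
        gammaPerp y (T ω) ∂P
        = (∫ ω, gammaPerp y (T ω) * (if Z ω = z then (1:ℝ) else 0) ∂P)
          - (P {ω' | Z ω' = z}).toReal * ∫ ω, gammaPerp y (T ω) ∂P := by
      have e1 : ∀ ω, ((if Z ω = z then (1:ℝ) else 0) - (P {ω' | Z ω' = z}).toReal) *
          gammaPerp y (T ω)
          = gammaPerp y (T ω) * (if Z ω = z then (1:ℝ) else 0)
            - (P {ω' | Z ω' = z}).toReal * gammaPerp y (T ω) := fun ω => by ring
      rw [integral_congr_ae (Filter.Eventually.of_forall e1)]
      rw [integral_sub]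
      · rw [integral_const_mul]
      · refine Integrable.mono' (integrable_const (2 * Real.exp 1))
          ((hGmeas y).mul hχm).aestronglyMeasurable
          (Filter.Eventually.of_forall fun ω => ?_)
        rw [norm_mul]
        have := hgb y hy (T ω) (hTmem ω)
        have h01 : ‖(if Z ω = z then (1:ℝ) else 0)‖ ≤ 1 := by
          by_cases hc : Z ω = z <;> simp [hc]
        have hnn := norm_nonneg (gammaPerp y (T ω))
        nlinarith [Real.exp_pos 1]
      · exact (hGint y hy).const_mul _
    rw [hsplit, hmul', hχmean]
    ring
  · -- reverse
    intro h
    have hkey : ∀ (z : 𝒵) (a : ℝ),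
        P (Y ⁻¹' Set.Iic a ∩ Z ⁻¹' {z}) = P (Y ⁻¹' Set.Iic a) * P (Z ⁻¹' {z}) := by
      intro z a
      have hSmeas : MeasurableSet (Z ⁻¹' {z} : Set Ω) := hZ (measurableSet_singleton z)
      set pz : ℝ := (P (Z ⁻¹' {z} : Set Ω)).toReal with hpz
      have hpz0 : 0 ≤ pz := ENNReal.toReal_nonneg
      have hpz1 : pz ≤ 1 := by
        calc pz ≤ (1 : ℝ≥0∞).toReal := ENNReal.toReal_mono ENNReal.one_ne_top prob_le_one
          _ = 1 := ENNReal.toReal_one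
      -- the two pushforward measures
      set μz : Measure ℝ := (P.restrict (Z ⁻¹' {z})).map T with hμz
      set ν : Measure ℝ := P.map T with hν
      haveI : IsFiniteMeasure (P.restrict (Z ⁻¹' {z})) :=
        ⟨by rw [Measure.restrict_apply_univ]; exact measure_lt_top P _⟩
      haveI : IsFiniteMeasure μz := Measure.isFiniteMeasure_map _ _
      haveI : IsProbabilityMeasure ν := Measure.isProbabilityMeasure_map hTmeas.aemeasurable
      have hμzA : ∀ {A : Set ℝ}, MeasurableSet A → μz A = P (T ⁻¹' A ∩ Z ⁻¹' {z}) := by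
        intro A hA
        rw [hμz, Measure.map_apply hTmeas hA, Measure.restrict_apply (hTmeas hA)]
      have hνA : ∀ {A : Set ℝ}, MeasurableSet A → ν A = P (T ⁻¹' A) := by
        intro A hA
        rw [hν, Measure.map_apply hTmeas hA]
      have hμzsupp : μz (Set.Icc (0:ℝ) 1)ᶜ = 0 := by
        rw [hμzA measurableSet_Icc.compl]
        have : T ⁻¹' (Set.Icc (0:ℝ) 1)ᶜ = ∅ := by
          ext ω; simp only [Set.mem_preimage, Set.mem_compl_iff, Set.mem_empty_iff_false,
            iff_false, not_not]
          exact hTmem ω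
        rw [this, Set.empty_inter, measure_empty]
      have hνsupp : ν (Set.Icc (0:ℝ) 1)ᶜ = 0 := by
        rw [hνA measurableSet_Icc.compl]
        have : T ⁻¹' (Set.Icc (0:ℝ) 1)ᶜ = ∅ := by
          ext ω; simp only [Set.mem_preimage, Set.mem_compl_iff, Set.mem_empty_iff_false,
            iff_false, not_not]
          exact hTmem ω
        rw [this, measure_empty]
      have hμzmass : μz Set.univ = P (Z ⁻¹' {z}) := by
        rw [hμzA MeasurableSet.univ, Set.preimage_univ, Set.univ_inter]
      have hmassμz : (μz Set.univ).toReal ≤ 1 := by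
        rw [hμzmass]
        calc (P (Z ⁻¹' {z})).toReal ≤ (1 : ℝ≥0∞).toReal :=
              ENNReal.toReal_mono ENNReal.one_ne_top prob_le_one
          _ = 1 := ENNReal.toReal_one
      have hmassν : (ν Set.univ).toReal ≤ 1 := by
        rw [measure_univ, ENNReal.toReal_one]
      -- Laplace transforms agree
      have hLap : ∀ y ∈ Set.Ioc (0:ℝ) 1,
          ∫ x, Real.exp (x * y) ∂μz = pz * ∫ x, Real.exp (x * y) ∂ν := by
        intro y hy
        have hy' : y ∈ Set.Icc (0:ℝ) 1 := ⟨hy.1.le, hy.2⟩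
        have h0 := h z y hy'
        -- identify the hypothesis integrand
        have hid : ∫ ω, ((if Z ω = z then (1:ℝ) else 0) - pz) * gammaPerp y (T ω) ∂P = 0 := h0
        -- expectation of gamma over restricted and full measure
        have hrestrint : Integrable (fun ω => gammaPerp y (T ω)) (P.restrict (Z ⁻¹' {z})) :=
          (hGint y hy').restrict
        have hEμz : ∫ x, gammaPerp y x ∂μz
            = ∫ ω, gammaPerp y (T ω) ∂(P.restrict (Z ⁻¹' {z})) := by
          rw [hμz]
          exact integral_map hTmeas.aemeasurable (hgm y).aestronglyMeasurable
        have hEν : ∫ x, gammaPerp y x ∂ν = ∫ ω, gammaPerp y (T ω) ∂P := by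
          rw [hν]
          exact integral_map hTmeas.aemeasurable (hgm y).aestronglyMeasurable
        -- split hypothesis
        have hχGint : Integrable
            (fun ω => (if Z ω = z then (1:ℝ) else 0) * gammaPerp y (T ω)) P := by
          have hχm : Measurable fun ω => if Z ω = z then (1:ℝ) else 0 := by
            have h2 : (fun ω => if Z ω = z then (1:ℝ) else 0)
                = (fun v => if v = z then (1:ℝ) else 0) ∘ Z := rfl
            rw [h2]; exact (measurable_of_countable _).comp hZ
          refine Integrable.mono' (integrable_const (2 * Real.exp 1))
            (hχm.mul (hGmeas y)).aestronglyMeasurable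
            (Filter.Eventually.of_forall fun ω => ?_)
          rw [norm_mul]
          have := hgb y hy' (T ω) (hTmem ω)
          have h01 : ‖(if Z ω = z then (1:ℝ) else 0)‖ ≤ 1 := by
            by_cases hc : Z ω = z <;> simp [hc]
          have hnn := norm_nonneg (gammaPerp y (T ω))
          have hnn2 := norm_nonneg ((if Z ω = z then (1:ℝ) else 0))
          nlinarith [Real.exp_pos 1]
        have hsplit : ∫ ω, ((if Z ω = z then (1:ℝ) else 0) - pz) * gammaPerp y (T ω) ∂P
            = (∫ ω, (if Z ω = z then (1:ℝ) else 0) * gammaPerp y (T ω) ∂P)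
              - pz * ∫ ω, gammaPerp y (T ω) ∂P := by
          have e1 : ∀ ω, ((if Z ω = z then (1:ℝ) else 0) - pz) * gammaPerp y (T ω)
              = (if Z ω = z then (1:ℝ) else 0) * gammaPerp y (T ω)
                - pz * gammaPerp y (T ω) := fun ω => by ring
          rw [integral_congr_ae (Filter.Eventually.of_forall e1), integral_sub hχGint
            ((hGint y hy').const_mul pz), integral_const_mul]
        have hindicator : ∫ ω, (if Z ω = z then (1:ℝ) else 0) * gammaPerp y (T ω) ∂P
            = ∫ ω, gammaPerp y (T ω) ∂(P.restrict (Z ⁻¹' {z})) := by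
          rw [← integral_indicator hSmeas]
          congr 1
          funext ω
          rw [Set.indicator_apply]
          by_cases hc : Z ω = z
          · have : ω ∈ Z ⁻¹' {z} := hc
            simp [hc, this]
          · have : ω ∉ Z ⁻¹' {z} := hc
            simp [hc, this]
        rw [hsplit, hindicator, ← hEμz, ← hEν] at hid
        -- unfold gammaPerp in the measure integrals
        have hexpintμz : Integrable (fun x => Real.exp (x * y)) μz :=
          aux_int_of_bound μz hμzsupp _ (by fun_prop) (Real.exp 1) (fun x hx => by
            rw [Real.norm_eq_abs, abs_of_pos (Real.exp_pos _)]
            exact Real.exp_le_exp.2 (by nlinarith [hx.1, hx.2, hy.1, hy.2]))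
        have hexpintν : Integrable (fun x => Real.exp (x * y)) ν :=
          aux_int_of_bound ν hνsupp _ (by fun_prop) (Real.exp 1) (fun x hx => by
            rw [Real.norm_eq_abs, abs_of_pos (Real.exp_pos _)]
            exact Real.exp_le_exp.2 (by nlinarith [hx.1, hx.2, hy.1, hy.2]))
        have hgamma_int : ∀ (ρ : Measure ℝ) [IsFiniteMeasure ρ],
            Integrable (fun x => Real.exp (x * y)) ρ →
            ∫ x, gammaPerp y x ∂ρ
              = y * (∫ x, Real.exp (x * y) ∂ρ) - (Real.exp y - 1) * (ρ Set.univ).toReal := by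
          intro ρ _ hint
          have e2 : ∀ x : ℝ, gammaPerp y x
              = y * Real.exp (x * y) - (Real.exp y - 1) := fun x => rfl
          calc ∫ x, gammaPerp y x ∂ρ
              = ∫ x, (y * Real.exp (x * y) - (Real.exp y - 1)) ∂ρ := by
                exact integral_congr_ae (Filter.Eventually.of_forall e2)
            _ = (∫ x, y * Real.exp (x * y) ∂ρ) - ∫ _, (Real.exp y - 1) ∂ρ :=
                integral_sub (hint.const_mul y) (integrable_const _)
            _ = y * (∫ x, Real.exp (x * y) ∂ρ) - (Real.exp y - 1) * (ρ Set.univ).toReal := by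
                rw [integral_const_mul, integral_const, smul_eq_mul, measureReal_def]
                ring
        rw [hgamma_int μz hexpintμz, hgamma_int ν hexpintν] at hid
        rw [hμzmass, measure_univ, ENNReal.toReal_one, ← hpz] at hid
        have hyne : y ≠ 0 := ne_of_gt hy.1
        have : y * ((∫ x, Real.exp (x * y) ∂μz) - pz * ∫ x, Real.exp (x * y) ∂ν) = 0 := by
          ring_nf
          ring_nf at hid
          linarith
        have h2 := (mul_eq_zero.1 this).resolve_left hyne
        linarith
      -- conclude measure equality
      have hμzeq : μz = (pz.toNNReal : ℝ≥0) • ν :=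
        aux_laplace_ext μz ν hμzsupp hνsupp hmassμz hmassν pz hpz0 hpz1 hLap
      -- evaluate at Iic (F a)
      have hIic : μz (Set.Iic (F a)) = ENNReal.ofReal pz * ν (Set.Iic (F a)) := by
        rw [hμzeq, Measure.smul_apply, ENNReal.smul_def, smul_eq_mul]
        rfl
      -- translate Iic (F a) back to Iic a
      have hDnull : P (T ⁻¹' Set.Iic (F a) \ Y ⁻¹' Set.Iic a) = 0 := by
        have hsub : T ⁻¹' Set.Iic (F a) \ Y ⁻¹' Set.Iic a
            ⊆ Y ⁻¹' {s | a < s ∧ F s ≤ F a} := by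
          rintro ω ⟨h1, h2⟩
          exact ⟨lt_of_not_ge h2, h1⟩
        refine measure_mono_null hsub ?_
        have hle := Measure.le_map_apply (μ := P) hY.aemeasurable {s | a < s ∧ F s ≤ F a}
        have hmap := aux_flat_null (P.map Y) hatomless a
        exact le_antisymm (hle.trans (le_of_eq hmap)) (by simp)
      have hsubYT : Y ⁻¹' Set.Iic a ⊆ T ⁻¹' Set.Iic (F a) := fun ω hω => hFmono hω
      have htrans : ∀ S : Set Ω, P (T ⁻¹' Set.Iic (F a) ∩ S) = P (Y ⁻¹' Set.Iic a ∩ S) := by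
        intro S
        refine le_antisymm ?_ (measure_mono (Set.inter_subset_inter_left S hsubYT))
        calc P (T ⁻¹' Set.Iic (F a) ∩ S)
            ≤ P ((Y ⁻¹' Set.Iic a ∩ S) ∪ (T ⁻¹' Set.Iic (F a) \ Y ⁻¹' Set.Iic a)) := by
              refine measure_mono ?_
              rintro ω ⟨h1, h2⟩
              by_cases hc : ω ∈ Y ⁻¹' Set.Iic a
              · exact Or.inl ⟨hc, h2⟩
              · exact Or.inr ⟨h1, hc⟩
          _ ≤ P (Y ⁻¹' Set.Iic a ∩ S) + P (T ⁻¹' Set.Iic (F a) \ Y ⁻¹' Set.Iic a) :=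
              measure_union_le _ _
          _ = P (Y ⁻¹' Set.Iic a ∩ S) := by rw [hDnull, add_zero]
      rw [hμzA measurableSet_Iic, hνA measurableSet_Iic] at hIic
      rw [htrans (Z ⁻¹' {z})] at hIic
      have h3 : P (T ⁻¹' Set.Iic (F a)) = P (Y ⁻¹' Set.Iic a) := by
        have h4 := htrans Set.univ
        simpa [Set.inter_univ] using h4
      rw [h3] at hIic
      rw [hIic, hpz, ENNReal.ofReal_toReal (measure_ne_top P _)]
      exact mul_comm _ _
    -- independence via π-systems
    rw [IndepFun_iff_Indep]
    have hm𝒵 : (inferInstance : MeasurableSpace 𝒵)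
        = MeasurableSpace.generateFrom (Set.range fun z : 𝒵 => ({z} : Set 𝒵)) := by
      refine le_antisymm ?_ (MeasurableSpace.generateFrom_le ?_)
      · intro s _
        have hs : s = ⋃ z ∈ s, ({z} : Set 𝒵) := by
          simp [Set.biUnion_of_singleton]
        rw [hs]
        exact MeasurableSet.biUnion (Set.to_countable s)
          (fun z _ => MeasurableSpace.measurableSet_generateFrom ⟨z, rfl⟩)
      · rintro t ⟨z, rfl⟩
        exact measurableSet_singleton z
    have hℝgen : (inferInstance : MeasurableSpace ℝ)
        = MeasurableSpace.generateFrom (Set.range (Set.Iic : ℝ → Set ℝ)) := by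
      rw [BorelSpace.measurable_eq (α := ℝ), borel_eq_generateFrom_Iic ℝ]
    have hcomap1 : MeasurableSpace.comap Y (inferInstance : MeasurableSpace ℝ)
        = MeasurableSpace.generateFrom (Set.preimage Y '' Set.range (Set.Iic : ℝ → Set ℝ)) := by
      rw [hℝgen, MeasurableSpace.comap_generateFrom]
    have hcomap2 : MeasurableSpace.comap Z (inferInstance : MeasurableSpace 𝒵)
        = MeasurableSpace.generateFrom
            (Set.preimage Z '' Set.range (fun z : 𝒵 => ({z} : Set 𝒵))) := by
      rw [hm𝒵, MeasurableSpace.comap_generateFrom]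
    have hp1 : IsPiSystem (Set.preimage Y '' Set.range (Set.Iic : ℝ → Set ℝ)) := by
      rintro _ ⟨s, ⟨a, rfl⟩, rfl⟩ _ ⟨t, ⟨b, rfl⟩, rfl⟩ _
      refine ⟨Set.Iic (min a b), ⟨min a b, rfl⟩, ?_⟩
      rw [← Set.preimage_inter, Set.Iic_inter_Iic]
    have hp2 : IsPiSystem (Set.preimage Z '' Set.range (fun z : 𝒵 => ({z} : Set 𝒵))) := by
      rintro _ ⟨s, ⟨z1, rfl⟩, rfl⟩ _ ⟨t, ⟨z2, rfl⟩, rfl⟩ hne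
      obtain ⟨ω, h1, h2⟩ := hne
      have hz : z1 = z2 := by
        simp only [Set.mem_preimage, Set.mem_singleton_iff] at h1 h2
        rw [← h1, ← h2]
      subst hz
      exact ⟨{z1}, ⟨z1, rfl⟩, by rw [Set.inter_self]⟩
    refine IndepSets.indep hY.comap_le hZ.comap_le hp1 hp2 hcomap1 hcomap2 ?_
    rintro s t ⟨s', ⟨a, rfl⟩, rfl⟩ ⟨t', ⟨z, rfl⟩, rfl⟩
    filter_upwards with u
    simpa using hkey z a
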